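/- Assume m > 1 and let z₀ > 0. Let U₁, U₂ : (0,∞) → [0,∞) be continuous functions such that for each i and every z > z₀ the function ρ ↦ K(z,ρ)·U_i(ρ) is Lebesgue integrable on (z,∞) and U_i(z)^m = ∫_z^∞ K(z,ρ)·U_i(ρ) dρ, and suppose the support of U₁ equals [0,R] for some R ∈ (z₀,∞). If U₁(z₀) = U₂(z₀), then U₁(z) = U₂(z) for all z ≥ z₀. -/

import Mathlib

set_option maxHeartbeats 1000000


open MeasureTheory Set Filter
open Topology

/-- The kernel profile `Q(η) = (1/Γ(1-α)) ∫_η^1 (1-σ^{1/b})^{-α} σ^{1-d} dσ` for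
`η ∈ (0,1)`; for `η ≥ 1` the interval `(η,1)` is empty, so `Q(η) = 0`. -/
noncomputable def Qker (d : ℕ) (α b : ℝ) (η : ℝ) : ℝ :=
  (1 / Real.Gamma (1 - α)) *
    ∫ σ in Set.Ioo η 1, (1 - σ ^ (1 / b)) ^ (-α) * σ ^ (1 - (d:ℝ))

/-- The kernel `K(z,ρ) = ρ·Q(z/ρ)`. -/
noncomputable def Kker (d : ℕ) (α b : ℝ) (z ρ : ℝ) : ℝ := ρ * Qker d α b (z / ρ)

section QK

variable {d : ℕ} {α b : ℝ}

lemma Qker_integrand_nonneg (hb0 : 0 < b) {σ : ℝ} (hσ0 : 0 < σ) (hσ1 : σ < 1) :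
    0 ≤ (1 - σ ^ (1 / b)) ^ (-α) * σ ^ (1 - (d:ℝ)) := by
  have h1 : (0:ℝ) ≤ 1 - σ ^ (1 / b) := by
    have := Real.rpow_lt_one hσ0.le hσ1 (one_div_pos.mpr hb0)
    linarith
  exact mul_nonneg (Real.rpow_nonneg h1 _) (Real.rpow_nonneg hσ0.le _)

lemma Qker_integrand_one_le (hα0 : 0 < α) (hb0 : 0 < b) (hd : 1 ≤ d)
    {σ : ℝ} (hσ0 : 0 < σ) (hσ1 : σ < 1) :
    (1:ℝ) ≤ (1 - σ ^ (1 / b)) ^ (-α) * σ ^ (1 - (d:ℝ)) := by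
  have hr : (0:ℝ) < σ ^ (1 / b) := Real.rpow_pos_of_pos hσ0 _
  have h1 : 0 < 1 - σ ^ (1 / b) := by
    have := Real.rpow_lt_one hσ0.le hσ1 (one_div_pos.mpr hb0)
    linarith
  have hA : (1:ℝ) ≤ (1 - σ ^ (1 / b)) ^ (-α) :=
    Real.one_le_rpow_of_pos_of_le_one_of_nonpos h1 (by linarith) (by linarith)
  have hB : (1:ℝ) ≤ σ ^ (1 - (d:ℝ)) := by
    apply Real.one_le_rpow_of_pos_of_le_one_of_nonpos hσ0 hσ1.le
    have : (1:ℝ) ≤ (d:ℝ) := by exact_mod_cast hd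
    linarith
  nlinarith

lemma Qker_integrableOn (hα0 : 0 < α) (hα1 : α < 1) (hb0 : 0 < b) (hb1 : b ≤ 1) (hd : 1 ≤ d)
    {η : ℝ} (hη : 0 < η) :
    IntegrableOn (fun σ : ℝ => (1 - σ ^ (1 / b)) ^ (-α) * σ ^ (1 - (d:ℝ))) (Ioo η 1) := by
  rcases le_or_gt 1 η with h1 | h1
  · rw [Set.Ioo_eq_empty (not_lt.mpr h1)]
    exact integrableOn_empty
  · have hmeas : Measurable fun σ : ℝ => (1 - σ ^ (1 / b)) ^ (-α) * σ ^ (1 - (d:ℝ)) := by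
      fun_prop
    have hbase : IntervalIntegrable (fun x : ℝ => x ^ (-α)) volume 0 (1 - η) :=
      intervalIntegral.intervalIntegrable_rpow' (by linarith)
    have h2 := hbase.comp_sub_left 1
    simp only [sub_zero, sub_sub_cancel] at h2
    -- h2 : IntervalIntegrable (fun x => (1 - x) ^ (-α)) volume 1 η
    have h3 : IntegrableOn (fun x : ℝ => (1 - x) ^ (-α)) (Ioo η 1) := by
      have := (intervalIntegrable_iff.mp h2)
      rw [Set.uIoc_of_ge h1.le] at this
      exact this.mono_set Set.Ioo_subset_Ioc_self
    refine Integrable.mono' ((h3.const_mul (η ^ (1 - (d:ℝ)))))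
      hmeas.aestronglyMeasurable.restrict ?_
    rw [ae_restrict_iff' measurableSet_Ioo]
    refine ae_of_all _ fun σ hσ => ?_
    obtain ⟨hσl, hσu⟩ := hσ
    have hσ0 : 0 < σ := lt_trans hη hσl
    rw [Real.norm_of_nonneg (Qker_integrand_nonneg hb0 hσ0 hσu)]
    have hfac1 : (1 - σ ^ (1 / b)) ^ (-α) ≤ (1 - σ) ^ (-α) := by
      have hσb : σ ^ (1 / b) ≤ σ := by
        have h1b : (1:ℝ) ≤ 1 / b := by
          rw [le_div_iff₀ hb0]; linarith
        have := Real.rpow_le_rpow_of_exponent_ge hσ0 hσu.le h1b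
        simpa [Real.rpow_one] using this
      have h1σ : (0:ℝ) < 1 - σ := by linarith
      have h1σb : (0:ℝ) < 1 - σ ^ (1 / b) := by
        have : σ ^ (1/b) ≤ σ := hσb
        linarith
      rw [Real.rpow_neg h1σ.le, Real.rpow_neg h1σb.le]
      apply inv_anti₀ (Real.rpow_pos_of_pos h1σ _)
      exact Real.rpow_le_rpow h1σ.le (by linarith) hα0.le
    have hfac2 : σ ^ (1 - (d:ℝ)) ≤ η ^ (1 - (d:ℝ)) := by
      have he : (0:ℝ) ≤ (d:ℝ) - 1 := by
        have : (1:ℝ) ≤ (d:ℝ) := by exact_mod_cast hd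
        linarith
      rw [show (1 - (d:ℝ)) = -((d:ℝ)-1) by ring, Real.rpow_neg hσ0.le, Real.rpow_neg hη.le]
      exact inv_anti₀ (Real.rpow_pos_of_pos hη _) (Real.rpow_le_rpow hη.le hσl.le he)
    calc (1 - σ ^ (1 / b)) ^ (-α) * σ ^ (1 - (d:ℝ))
        ≤ (1 - σ) ^ (-α) * η ^ (1 - (d:ℝ)) := by
          apply mul_le_mul hfac1 hfac2 (Real.rpow_nonneg hσ0.le _) (Real.rpow_nonneg (by linarith) _)
      _ = η ^ (1 - (d:ℝ)) * (1 - σ) ^ (-α) := mul_comm _ _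


lemma Gamma_pos {α : ℝ} (hα1 : α < 1) : 0 < Real.Gamma (1 - α) :=
  Real.Gamma_pos_of_pos (by linarith)

lemma Qker_nonneg (hα1 : α < 1) (hb0 : 0 < b) {η : ℝ} (hη : 0 < η) :
    0 ≤ Qker d α b η := by
  unfold Qker
  have hΓ := Gamma_pos (α:=α) hα1
  apply mul_nonneg (by positivity)
  apply setIntegral_nonneg measurableSet_Ioo
  exact fun σ hσ => Qker_integrand_nonneg hb0 (lt_trans hη hσ.1) hσ.2

lemma Qker_anti (hα0 : 0 < α) (hα1 : α < 1) (hb0 : 0 < b) (hb1 : b ≤ 1) (hd : 1 ≤ d)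
    {η₁ η₂ : ℝ} (hη₁ : 0 < η₁) (h12 : η₁ ≤ η₂) :
    Qker d α b η₂ ≤ Qker d α b η₁ := by
  have hη₂ : 0 < η₂ := lt_of_lt_of_le hη₁ h12
  unfold Qker
  have hΓ := Gamma_pos (α:=α) hα1
  apply mul_le_mul_of_nonneg_left _ (by positivity : (0:ℝ) ≤ 1 / Real.Gamma (1 - α))
  rcases le_or_gt 1 η₂ with h1 | h1
  · rw [Set.Ioo_eq_empty (not_lt.mpr h1), MeasureTheory.setIntegral_empty]
    apply setIntegral_nonneg measurableSet_Ioo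
    exact fun σ hσ => Qker_integrand_nonneg hb0 (lt_trans hη₁ hσ.1) hσ.2
  · apply setIntegral_mono_set (Qker_integrableOn hα0 hα1 hb0 hb1 hd hη₁)
    · filter_upwards [ae_restrict_mem measurableSet_Ioo] with σ hσ
      exact Qker_integrand_nonneg hb0 (lt_trans hη₁ hσ.1) hσ.2
    · exact HasSubset.Subset.eventuallyLE (Set.Ioo_subset_Ioo_left h12)

lemma Qker_pos (hα0 : 0 < α) (hα1 : α < 1) (hb0 : 0 < b) (hb1 : b ≤ 1) (hd : 1 ≤ d)
    {η : ℝ} (hη0 : 0 < η) (hη1 : η < 1) :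
    0 < Qker d α b η := by
  unfold Qker
  have hΓ := Gamma_pos (α:=α) hα1
  apply mul_pos (by positivity)
  have h1 : (1 - η : ℝ) = ∫ σ in Ioo η 1, (1:ℝ) := by
    simp [Real.volume_Ioo, ENNReal.toReal_ofReal (by linarith : (0:ℝ) ≤ 1 - η), hη1.le]
  have h2 : ∫ σ in Ioo η 1, (1:ℝ) ≤ ∫ σ in Ioo η 1, (1 - σ ^ (1 / b)) ^ (-α) * σ ^ (1 - (d:ℝ)) := by
    apply setIntegral_mono_on (integrableOn_const measure_Ioo_lt_top.ne)
      (Qker_integrableOn hα0 hα1 hb0 hb1 hd hη0) measurableSet_Ioo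
    exact fun σ hσ => Qker_integrand_one_le hα0 hb0 hd (lt_trans hη0 hσ.1) hσ.2
  linarith [lt_of_lt_of_le (by linarith : (0:ℝ) < 1 - η) (h1.le.trans h2)]

lemma Kker_nonneg (hα1 : α < 1) (hb0 : 0 < b) {z ρ : ℝ} (hz : 0 < z) (hρ : z < ρ) :
    0 ≤ Kker d α b z ρ := by
  have hρ0 : 0 < ρ := lt_trans hz hρ
  exact mul_nonneg hρ0.le (Qker_nonneg hα1 hb0 (div_pos hz hρ0))

lemma Kker_anti_left (hα0 : 0 < α) (hα1 : α < 1) (hb0 : 0 < b) (hb1 : b ≤ 1) (hd : 1 ≤ d)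
    {z z' ρ : ℝ} (hz' : 0 < z') (hz : z' ≤ z) (hρ : z < ρ) :
    Kker d α b z ρ ≤ Kker d α b z' ρ := by
  have hρ0 : 0 < ρ := lt_trans (lt_of_lt_of_le hz' hz) hρ
  apply mul_le_mul_of_nonneg_left _ hρ0.le
  exact Qker_anti hα0 hα1 hb0 hb1 hd (div_pos hz' hρ0) (by gcongr)

end QK

section QK2

variable {d : ℕ} {α b : ℝ}

lemma Kker_le_bound (hα0 : 0 < α) (hα1 : α < 1) (hb0 : 0 < b) (hb1 : b ≤ 1) (hd : 1 ≤ d)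
    {z₁ z ρ M : ℝ} (hz₁ : 0 < z₁) (h1z : z₁ ≤ z) (hρ : z < ρ) (hM : ρ ≤ M) :
    Kker d α b z ρ ≤ M * Qker d α b (z₁ / M) := by
  have hρ0 : 0 < ρ := lt_trans (lt_of_lt_of_le hz₁ h1z) hρ
  have hM0 : 0 < M := lt_of_lt_of_le hρ0 hM
  have hq : Qker d α b (z / ρ) ≤ Qker d α b (z₁ / M) := by
    apply Qker_anti hα0 hα1 hb0 hb1 hd (div_pos hz₁ hM0)
    calc z₁ / M ≤ z₁ / ρ := by gcongr
      _ ≤ z / ρ := by gcongr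
  exact mul_le_mul hM hq (Qker_nonneg hα1 hb0 (div_pos (lt_of_lt_of_le hz₁ h1z) hρ0))
    hM0.le

lemma Kker_ge_bound (hα0 : 0 < α) (hα1 : α < 1) (hb0 : 0 < b) (hb1 : b ≤ 1) (hd : 1 ≤ d)
    {z z₁ p ρ : ℝ} (hz : 0 < z) (hz₁ : z ≤ z₁) (h1p : z₁ < p) (hpρ : p ≤ ρ) :
    p * Qker d α b (z₁ / p) ≤ Kker d α b z ρ := by
  have hz₁0 : 0 < z₁ := lt_of_lt_of_le hz hz₁
  have hp0 : 0 < p := lt_trans hz₁0 h1p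
  have hρ0 : 0 < ρ := lt_of_lt_of_le hp0 hpρ
  have hq : Qker d α b (z₁ / p) ≤ Qker d α b (z / ρ) := by
    apply Qker_anti hα0 hα1 hb0 hb1 hd (div_pos hz hρ0)
    calc z / ρ ≤ z₁ / ρ := by gcongr
      _ ≤ z₁ / p := by gcongr
  exact mul_le_mul hpρ hq (Qker_nonneg hα1 hb0 (div_pos hz₁0 hp0)) hρ0.le

end QK2

lemma le_of_rpow_le {m a c : ℝ} (hm0 : 0 < m) (ha : 0 ≤ a) (hc : 0 ≤ c)
    (h : a ^ m ≤ c ^ m) : a ≤ c := by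
  by_contra hlt
  push_neg at hlt
  exact absurd h (not_le.mpr (Real.rpow_lt_rpow hc hlt hm0))

/-- A solution of the profile integral equation on `(z₀,∞)`. -/
structure IsSolS (d : ℕ) (α b m z₀ : ℝ) (U : ℝ → ℝ) : Prop where
  cont : ContinuousOn U (Set.Ioi 0)
  nonneg : ∀ z, 0 < z → 0 ≤ U z
  intgr : ∀ z, z₀ < z → IntegrableOn (fun ρ => Kker d α b z ρ * U ρ) (Set.Ioi z)
  eqn : ∀ z, z₀ < z → U z ^ m = ∫ ρ in Set.Ioi z, Kker d α b z ρ * U ρ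

section Sol

variable {d : ℕ} {α b m z₀ : ℝ} {U V B W : ℝ → ℝ}

lemma IsSolS.continuousAt (hU : IsSolS d α b m z₀ U) {x : ℝ} (hx : 0 < x) :
    ContinuousAt U x :=
  hU.cont.continuousAt (Ioi_mem_nhds hx)

lemma IsSolS.anti (hα0 : 0 < α) (hα1 : α < 1) (hb0 : 0 < b) (hb1 : b ≤ 1) (hd : 1 ≤ d)
    (hm : 1 < m) (hz₀ : 0 < z₀) (hU : IsSolS d α b m z₀ U) :
    ∀ x y, z₀ ≤ x → x ≤ y → U y ≤ U x := by
  have interior : ∀ x y, z₀ < x → x ≤ y → U y ≤ U x := by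
    intro x y hx hxy
    rcases eq_or_lt_of_le hxy with rfl | hxy
    · exact le_refl _
    have hx0 : 0 < x := lt_trans hz₀ hx
    have hy0 : 0 < y := lt_trans hx0 hxy
    have hy : z₀ < y := lt_trans hx hxy
    apply le_of_rpow_le (by linarith : (0:ℝ) < m) (hU.nonneg y hy0) (hU.nonneg x hx0)
    rw [hU.eqn y hy, hU.eqn x hx]
    have step1 : ∫ ρ in Ioi y, Kker d α b y ρ * U ρ ≤ ∫ ρ in Ioi y, Kker d α b x ρ * U ρ := by
      apply setIntegral_mono_on ((hU.intgr y hy))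
        ((hU.intgr x hx).mono_set (Ioi_subset_Ioi hxy.le)) measurableSet_Ioi
      intro ρ hρ
      exact mul_le_mul_of_nonneg_right
        (Kker_anti_left hα0 hα1 hb0 hb1 hd hx0 hxy.le hρ)
        (hU.nonneg ρ (lt_trans hy0 hρ))
    have step2 : ∫ ρ in Ioi y, Kker d α b x ρ * U ρ ≤ ∫ ρ in Ioi x, Kker d α b x ρ * U ρ := by
      apply setIntegral_mono_set (hU.intgr x hx)
      · filter_upwards [ae_restrict_mem measurableSet_Ioi] with ρ hρ
        exact mul_nonneg (Kker_nonneg hα1 hb0 hx0 hρ) (hU.nonneg ρ (lt_trans hx0 hρ))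
      · exact HasSubset.Subset.eventuallyLE (Ioi_subset_Ioi hxy.le)
    linarith
  intro x y hx hxy
  rcases eq_or_lt_of_le hx with rfl | hx
  · rcases eq_or_lt_of_le hxy with rfl | hxy
    · exact le_refl _
    have hlim : Tendsto U (nhdsWithin z₀ (Ioi z₀)) (nhds (U z₀)) :=
      ((hU.continuousAt hz₀).tendsto).mono_left nhdsWithin_le_nhds
    apply ge_of_tendsto hlim
    filter_upwards [Ioc_mem_nhdsGT_of_mem (⟨le_refl z₀, hxy⟩ : z₀ ∈ Ico z₀ y)] with z hz
    exact interior z y hz.1 hz.2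
  · exact interior x y hx hxy

end Sol

section Sol2

variable {d : ℕ} {α b m z₀ : ℝ} {U f : ℝ → ℝ}

lemma integral_lb (hα0 : 0 < α) (hα1 : α < 1) (hb0 : 0 < b) (hb1 : b ≤ 1) (hd : 1 ≤ d)
    {z z₁ p q θ : ℝ}
    (hz : 0 < z) (hzz₁ : z ≤ z₁) (h1p : z₁ < p) (hpq : p < q) (hθ : 0 < θ)
    (hflb : ∀ ρ, ρ ∈ Icc p q → θ ≤ f ρ)
    (hnn : ∀ ρ, z < ρ → 0 ≤ f ρ)
    (hint : IntegrableOn (fun ρ => Kker d α b z ρ * f ρ) (Ioi z)) :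
    p * Qker d α b (z₁ / p) * θ * (q - p) ≤ ∫ ρ in Ioi z, Kker d α b z ρ * f ρ := by
  have hz₁0 : 0 < z₁ := lt_of_lt_of_le hz hzz₁
  have hp0 : 0 < p := lt_trans hz₁0 h1p
  have hzp : z < p := lt_of_le_of_lt hzz₁ h1p
  have hsub : Ioo p q ⊆ Ioi z := fun ρ hρ => lt_trans hzp hρ.1
  have step1 : ∫ _ in Ioo p q, (p * Qker d α b (z₁/p) * θ) ≤
      ∫ ρ in Ioo p q, Kker d α b z ρ * f ρ := by
    apply setIntegral_mono_on (integrableOn_const measure_Ioo_lt_top.ne)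
      (hint.mono_set hsub) measurableSet_Ioo
    intro ρ hρ
    have h1 : p * Qker d α b (z₁/p) ≤ Kker d α b z ρ :=
      Kker_ge_bound hα0 hα1 hb0 hb1 hd hz hzz₁ h1p hρ.1.le
    have h2 : θ ≤ f ρ := hflb ρ ⟨hρ.1.le, hρ.2.le⟩
    apply mul_le_mul h1 h2 hθ.le
    exact Kker_nonneg hα1 hb0 hz (hsub hρ)
  have step2 : ∫ ρ in Ioo p q, Kker d α b z ρ * f ρ ≤ ∫ ρ in Ioi z, Kker d α b z ρ * f ρ := by
    apply setIntegral_mono_set hint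
    · filter_upwards [ae_restrict_mem measurableSet_Ioi] with ρ hρ
      exact mul_nonneg (Kker_nonneg hα1 hb0 hz hρ) (hnn ρ hρ)
    · exact HasSubset.Subset.eventuallyLE hsub
  have hconst : ∫ _ in Ioo p q, (p * Qker d α b (z₁/p) * θ) =
      (q - p) * (p * Qker d α b (z₁/p) * θ) := by
    rw [setIntegral_const, Real.volume_real_Ioo_of_le (by linarith), smul_eq_mul]
  rw [hconst] at step1
  nlinarith [step1, step2]

lemma IsSolS.scale (hm : 1 < m) (hz₀ : 0 < z₀) (hU : IsSolS d α b m z₀ U) {l : ℝ} (hl : 1 ≤ l) :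
    IsSolS d α b m z₀ (fun z => l ^ (-(2/(m-1))) * U (l * z)) := by
  have hl0 : 0 < l := lt_of_lt_of_le one_pos hl
  have hm1 : (0:ℝ) < m - 1 := by linarith
  have hlz : ∀ z, z₀ < z → z₀ < l * z := fun z hz =>
    lt_of_lt_of_le hz (le_mul_of_one_le_left (by linarith) hl)
  have key : ∀ z : ℝ, ∀ ρ ∈ Ioi z, 0 < z →
      Kker d α b z ρ * (l ^ (-(2/(m-1))) * U (l * ρ)) =
      (l ^ (-(2/(m-1))) * l⁻¹) * (Kker d α b (l*z) (l*ρ) * U (l*ρ)) := by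
    intro z ρ hρ hz
    unfold Kker
    rw [mul_div_mul_left _ _ (ne_of_gt hl0)]
    field_simp
  have hInt : ∀ z, z₀ < z → IntegrableOn
      (fun ρ => Kker d α b z ρ * (l ^ (-(2/(m-1))) * U (l * ρ))) (Ioi z) := by
    intro z hz
    have hIl := hU.intgr (l*z) (hlz z hz)
    have h2 := (integrableOn_Ioi_comp_mul_left_iff
      (fun ρ => Kker d α b (l*z) ρ * U ρ) z hl0).mpr hIl
    have h3 : IntegrableOn
        (fun x => (l ^ (-(2/(m-1))) * l⁻¹) * (Kker d α b (l*z) (l*x) * U (l*x))) (Ioi z) :=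
      h2.const_mul (l ^ (-(2/(m-1))) * l⁻¹)
    apply IntegrableOn.congr_fun h3 _ measurableSet_Ioi
    intro ρ hρ
    exact (key z ρ hρ (lt_trans hz₀ hz)).symm
  constructor
  · apply ContinuousOn.mul continuousOn_const
    apply hU.cont.comp (continuous_const.mul continuous_id).continuousOn
    intro z hz
    exact mul_pos hl0 hz
  · intro z hz
    exact mul_nonneg (Real.rpow_nonneg hl0.le _) (hU.nonneg _ (mul_pos hl0 hz))
  · exact hInt
  · intro z hz
    have hz0 : 0 < z := lt_trans hz₀ hz
    have hcongr : ∫ ρ in Ioi z, Kker d α b z ρ * (l ^ (-(2/(m-1))) * U (l * ρ)) =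
        ∫ ρ in Ioi z, (l ^ (-(2/(m-1))) * l⁻¹) * (Kker d α b (l*z) (l*ρ) * U (l*ρ)) := by
      apply setIntegral_congr_fun measurableSet_Ioi
      intro ρ hρ
      exact key z ρ hρ hz0
    have hchg : ∫ ρ in Ioi z, Kker d α b (l*z) (l*ρ) * U (l*ρ) =
        l⁻¹ • ∫ s in Ioi (l*z), Kker d α b (l*z) s * U s :=
      MeasureTheory.integral_comp_mul_left_Ioi (fun s => Kker d α b (l*z) s * U s) z hl0
    have heq := hU.eqn (l*z) (hlz z hz)
    have hpow : (l ^ (-(2/(m-1))) * U (l * z)) ^ m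
        = l ^ (-(2/(m-1))) * l⁻¹ * l⁻¹ * U (l*z) ^ m := by
      rw [Real.mul_rpow (Real.rpow_nonneg hl0.le _) (hU.nonneg _ (mul_pos hl0 hz0))]
      congr 1
      rw [← Real.rpow_mul hl0.le]
      have hexp : (-(2/(m-1))) * m = (-(2/(m-1))) + (-1) + (-1) := by
        field_simp
        ring
      rw [hexp, Real.rpow_add hl0, Real.rpow_add hl0, Real.rpow_neg_one]
    rw [hpow, heq, hcongr]
    rw [MeasureTheory.integral_const_mul, hchg, smul_eq_mul]
    ring

end Sol2

lemma rpow_sub_ge {m v a c : ℝ} (hm : 1 < m) (hv : 0 < v) (hva : v ≤ a) (hac : a ≤ c) :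
    m * v ^ (m-1) * (c - a) ≤ c ^ m - a ^ m := by
  have hmono : MonotoneOn (fun x : ℝ => x ^ m - m * v ^ (m-1) * x) (Ici v) := by
    apply monotoneOn_of_deriv_nonneg (convex_Ici v)
    · apply ContinuousOn.sub _ (continuousOn_const.mul continuousOn_id)
      intro x hx
      exact (Real.continuousAt_rpow_const x m (Or.inl (ne_of_gt (lt_of_lt_of_le hv hx)))).continuousWithinAt
    · intro x hx
      rw [interior_Ici] at hx
      have hx0 : x ≠ 0 := ne_of_gt (lt_trans hv hx)
      have hD : HasDerivAt (fun x : ℝ => x ^ m - m * v ^ (m-1) * x)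
          (m * x ^ (m-1) - m * v ^ (m-1) * 1) x :=
        (Real.hasDerivAt_rpow_const (p := m) (Or.inl hx0)).sub
          ((hasDerivAt_id x).const_mul (m * v ^ (m-1)))
      exact hD.differentiableAt.differentiableWithinAt
    · intro x hx
      rw [interior_Ici] at hx
      have hx0 : x ≠ 0 := ne_of_gt (lt_trans hv hx)
      have hD : HasDerivAt (fun x : ℝ => x ^ m - m * v ^ (m-1) * x)
          (m * x ^ (m-1) - m * v ^ (m-1) * 1) x :=
        (Real.hasDerivAt_rpow_const (p := m) (Or.inl hx0)).sub
          ((hasDerivAt_id x).const_mul (m * v ^ (m-1)))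
      rw [hD.deriv]
      have : v ^ (m-1) ≤ x ^ (m-1) := Real.rpow_le_rpow hv.le (le_of_lt hx) (by linarith)
      nlinarith
  have h1 := hmono (Set.mem_Ici.mpr hva) (Set.mem_Ici.mpr (le_trans hva hac)) hac
  simp only [] at h1
  linarith

section Gronwall

variable {d : ℕ} {α b m z₀ : ℝ} {B W : ℝ → ℝ}

lemma eq_propagate (hα0 : 0 < α) (hα1 : α < 1) (hb0 : 0 < b) (hb1 : b ≤ 1) (hd : 1 ≤ d)
    (hm : 1 < m) (hz₀ : 0 < z₀)
    (hB : IsSolS d α b m z₀ B) (hW : IsSolS d α b m z₀ W)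
    {zb : ℝ} (hzb : z₀ < zb)
    (hle : ∀ z, z₀ ≤ z → W z ≤ B z)
    (hWpos : 0 < W zb)
    (heq : ∀ z, zb ≤ z → B z = W z) :
    B z₀ = W z₀ := by
  have hzb0 : 0 < zb := lt_trans hz₀ hzb
  set v := W zb with hv_def
  have hWanti := hW.anti hα0 hα1 hb0 hb1 hd hm hz₀
  set c := m * v ^ (m-1) with hc_def
  have hc : 0 < c := by
    have h1 : (0:ℝ) < v ^ (m-1) := Real.rpow_pos_of_pos hWpos (m-1)
    have hm0 : (0:ℝ) < m := by linarith
    positivity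
  have hQnn : 0 ≤ Qker d α b (z₀/zb) :=
    Qker_nonneg hα1 hb0 (div_pos hz₀ hzb0)
  set C := zb * Qker d α b (z₀/zb) + 1 with hC_def
  have hC : 0 < C := by
    have h1 : 0 ≤ zb * Qker d α b (z₀/zb) := mul_nonneg hzb0.le hQnn
    rw [hC_def]
    linarith
  set ε := c / (2*C) with hε_def
  have hε : 0 < ε := by positivity
  have gnn : ∀ x, z₀ ≤ x → 0 ≤ B x - W x := fun x hx => by linarith [hle x hx]
  -- one-step propagation
  have hstep : ∀ t, z₀ < t → t ≤ zb → (∀ z, t ≤ z → B z = W z) →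
      ∀ z, z₀ < z → t - ε < z → B z = W z := by
    intro t ht0 htzb hEq z hz0 hzε
    rcases le_or_gt t z with hcase | hcase
    · exact hEq z hcase
    have hzt : z ≤ t := hcase.le
    have hz00 : (0:ℝ) < z := lt_trans hz₀ hz0
    have hIcc_pos : Icc z t ⊆ Ioi (0:ℝ) := fun x hx => lt_of_lt_of_le hz00 hx.1
    have hgc : ContinuousOn (fun x => B x - W x) (Icc z t) :=
      (hB.cont.sub hW.cont).mono hIcc_pos
    obtain ⟨xs, hxs_mem, hxs_max⟩ :=
      isCompact_Icc.exists_isMaxOn (Set.nonempty_Icc.mpr hzt) hgc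
    set M := B xs - W xs with hM_def
    have hgt0 : B t - W t = 0 := by rw [hEq t (le_refl t)]; ring
    have hM0 : 0 ≤ M := by
      have := hxs_max (Set.mem_Icc.mpr ⟨hzt, le_refl t⟩)
      simp only [Set.mem_setOf_eq] at this
      linarith [hM_def]
    -- key estimate for all points of [z,t)
    have hkey : ∀ y, y ∈ Icc z t → y < t → B y - W y ≤ M / 2 := by
      intro y hy hyt
      have hy0 : z₀ < y := lt_of_lt_of_le hz0 hy.1
      have hy00 : (0:ℝ) < y := lt_trans hz₀ hy0
      have hIB := hB.intgr y hy0
      have hIW := hW.intgr y hy0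
      have hI : ∫ ρ in Ioi y, (Kker d α b y ρ * B ρ - Kker d α b y ρ * W ρ)
          = B y ^ m - W y ^ m := by
        rw [integral_sub hIB hIW, ← hB.eqn y hy0, ← hW.eqn y hy0]
      have hIdiff : IntegrableOn (fun ρ => Kker d α b y ρ * B ρ - Kker d α b y ρ * W ρ) (Ioi y) :=
        hIB.sub hIW
      have hsplit : Ioi y = Ioc y t ∪ Ioi t := (Set.Ioc_union_Ioi_eq_Ioi hyt.le).symm
      have htail : ∫ ρ in Ioi t, (Kker d α b y ρ * B ρ - Kker d α b y ρ * W ρ) = 0 := by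
        rw [setIntegral_congr_fun measurableSet_Ioi
          (fun ρ hρ => by rw [hEq ρ (le_of_lt hρ)]; ring : EqOn _ (fun _ => (0:ℝ)) (Ioi t))]
        simp
      have hunion : ∫ ρ in Ioi y, (Kker d α b y ρ * B ρ - Kker d α b y ρ * W ρ)
          = ∫ ρ in Ioc y t, (Kker d α b y ρ * B ρ - Kker d α b y ρ * W ρ) := by
        rw [hsplit, setIntegral_union (Set.Ioc_disjoint_Ioi (le_refl t)) measurableSet_Ioi
          (hIdiff.mono_set (by rw [hsplit]; exact Set.subset_union_left))
          (hIdiff.mono_set (by rw [hsplit]; exact Set.subset_union_right)), htail, add_zero]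
      have hbnd : ∫ ρ in Ioc y t, (Kker d α b y ρ * B ρ - Kker d α b y ρ * W ρ)
          ≤ (t - y) * (C * M) := by
        have h1 : ∫ ρ in Ioc y t, (Kker d α b y ρ * B ρ - Kker d α b y ρ * W ρ)
            ≤ ∫ _ in Ioc y t, C * M := by
          apply setIntegral_mono_on
            (hIdiff.mono_set (by rw [hsplit]; exact Set.subset_union_left))
            (integrableOn_const measure_Ioc_lt_top.ne) measurableSet_Ioc
          intro ρ hρ
          have hρy : y < ρ := hρ.1
          have hρ0 : (0:ℝ) < ρ := lt_trans hy00 hρy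
          have hKle : Kker d α b y ρ ≤ C := by
            have := Kker_le_bound hα0 hα1 hb0 hb1 hd hz₀ (le_of_lt hy0) hρy
              (le_trans hρ.2 htzb)
            rw [hC_def]; linarith
          have hKnn : 0 ≤ Kker d α b y ρ := Kker_nonneg hα1 hb0 hy00 hρy
          have hgM : B ρ - W ρ ≤ M := by
            have := hxs_max (Set.mem_Icc.mpr ⟨le_trans hy.1 hρ.1.le, hρ.2⟩)
            simpa using this
          have hgnn : 0 ≤ B ρ - W ρ := gnn ρ (le_of_lt (lt_trans hy0 hρy))
          calc Kker d α b y ρ * B ρ - Kker d α b y ρ * W ρ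
              = Kker d α b y ρ * (B ρ - W ρ) := by ring
            _ ≤ C * M := mul_le_mul hKle hgM hgnn hC.le
        have h2 : ∫ _ in Ioc y t, C * M = (t - y) * (C * M) := by
          rw [setIntegral_const, Real.volume_real_Ioc_of_le (by linarith), smul_eq_mul]
        linarith
      have hlow : c * (B y - W y) ≤ B y ^ m - W y ^ m := by
        have hvW : v ≤ W y := hWanti y zb (le_of_lt hy0) (le_trans hy.2 htzb)
        have := rpow_sub_ge hm hWpos hvW (hle y (le_of_lt hy0))
        rw [hc_def]; linarith
      have hty : t - y ≤ ε := by
        have : t - ε < y := lt_of_lt_of_le hzε hy.1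
        linarith
      have hCMnn : 0 ≤ C * M := mul_nonneg hC.le hM0
      have hfin : c * (B y - W y) ≤ ε * (C * M) := by
        have : (t - y) * (C * M) ≤ ε * (C * M) := mul_le_mul_of_nonneg_right hty hCMnn
        linarith [hI, hunion, hbnd]
      have hεC : ε * (C * M) = c * M / 2 := by
        rw [hε_def]; field_simp
      rw [hεC] at hfin
      have := (mul_le_mul_iff_of_pos_left hc).mp (by linarith : c * (B y - W y) ≤ c * (M/2))
      linarith
    -- conclude M ≤ 0
    have hMle : M ≤ M / 2 := by
      rcases lt_or_eq_of_le hxs_mem.2 with hlt | heqt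
      · exact hkey xs hxs_mem hlt
      · rw [hM_def, heqt]; linarith
    have hMfin : M ≤ 0 := by linarith
    have h1 : B z - W z ≤ 0 := le_trans (by
      have := hxs_max (Set.mem_Icc.mpr ⟨le_refl z, hzt⟩)
      simpa using this) hMfin
    have h2 : 0 ≤ B z - W z := gnn z hz0.le
    linarith
  -- iterate
  have hiter : ∀ k : ℕ, ∀ z, z₀ < z → zb - k * ε < z → B z = W z := by
    intro k
    induction k with
    | zero => intro z hz0 hzb'; exact heq z (by push_cast at hzb'; linarith)
    | succ k ih =>
      intro z hz0 hzb'
      set t := zb - k * ε with ht_def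
      rcases le_or_gt t z₀ with htz | htz
      · exact ih z hz0 (by linarith)
      · have htzb : t ≤ zb := by
          have : (0:ℝ) ≤ k * ε := mul_nonneg (Nat.cast_nonneg k) hε.le
          rw [ht_def]; linarith
        have hEqt : ∀ w, t ≤ w → B w = W w := by
          intro w hw
          rcases eq_or_lt_of_le hw with hw0 | hw'
          · -- w = t : use continuity from the right
            subst hw0
            have hcont : ContinuousAt (fun x => B x - W x) t :=
              ((hB.continuousAt (lt_trans hz₀ htz)).sub (hW.continuousAt (lt_trans hz₀ htz)))
            have hlim : Tendsto (fun x => B x - W x) (nhdsWithin t (Ioi t))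
                (nhds (B t - W t)) := hcont.tendsto.mono_left nhdsWithin_le_nhds
            have hev : (fun x => B x - W x) =ᶠ[nhdsWithin t (Ioi t)] fun _ => 0 := by
              filter_upwards [self_mem_nhdsWithin] with x hx
              have := ih x (lt_trans htz hx) hx
              simp [this]
            have h0 : Tendsto (fun x => B x - W x) (nhdsWithin t (Ioi t)) (nhds 0) := by
              rw [tendsto_congr' hev]; exact tendsto_const_nhds
            have := tendsto_nhds_unique hlim h0
            linarith
          · exact ih w (lt_trans htz hw') hw'
        apply hstep t htz htzb hEqt z hz0
        rw [ht_def]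
        push_cast at hzb'
        linarith
  -- all z > z₀
  have hall : ∀ z, z₀ < z → B z = W z := by
    intro z hz0
    obtain ⟨k, hk⟩ := exists_nat_gt ((zb - z₀) / ε)
    have : zb - k * ε < z₀ := by
      have := (div_lt_iff₀ hε).mp hk
      linarith
    exact hiter k z hz0 (by linarith)
  -- at z₀ by continuity
  have hcont : ContinuousAt (fun x => B x - W x) z₀ :=
    (hB.continuousAt hz₀).sub (hW.continuousAt hz₀)
  have hlim : Tendsto (fun x => B x - W x) (nhdsWithin z₀ (Ioi z₀)) (nhds (B z₀ - W z₀)) :=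
    hcont.tendsto.mono_left nhdsWithin_le_nhds
  have hev : (fun x => B x - W x) =ᶠ[nhdsWithin z₀ (Ioi z₀)] fun _ => 0 := by
    filter_upwards [self_mem_nhdsWithin] with x hx
    simp [hall x hx]
  have h0 : Tendsto (fun x => B x - W x) (nhdsWithin z₀ (Ioi z₀)) (nhds 0) := by
    rw [tendsto_congr' hev]; exact tendsto_const_nhds
  have := tendsto_nhds_unique hlim h0
  linarith

end Gronwall

section Slide

variable {d : ℕ} {α b m z₀ : ℝ} {V B : ℝ → ℝ}

lemma slide_le (hα0 : 0 < α) (hα1 : α < 1) (hb0 : 0 < b) (hb1 : b ≤ 1) (hd : 1 ≤ d)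
    (hm : 1 < m) (hz₀ : 0 < z₀)
    (hV : IsSolS d α b m z₀ V) (hB : IsSolS d α b m z₀ B)
    (hval : V z₀ = B z₀)
    {ζ : ℝ} (hζ : z₀ < ζ)
    (hVpos : ∀ z, z₀ ≤ z → z < ζ → 0 < V z)
    (hVzero : ∀ z, ζ < z → V z = 0)
    (hBpos : ∀ z, z₀ ≤ z → z < ζ → 0 < B z) :
    ∀ z, z₀ ≤ z → V z ≤ B z := by
  have hζ0 : (0:ℝ) < ζ := lt_trans hz₀ hζ
  have hcpos : (0:ℝ) < 2/(m-1) := by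
    have : (0:ℝ) < m - 1 := by linarith
    positivity
  have hu₀ : 0 < V z₀ := hVpos z₀ (le_refl z₀) hζ
  have hVanti := hV.anti hα0 hα1 hb0 hb1 hd hm hz₀
  -- V ζ = 0 by continuity
  have hVζ : V ζ = 0 := by
    have hlim : Tendsto V (nhdsWithin ζ (Ioi ζ)) (nhds (V ζ)) :=
      (hV.continuousAt hζ0).tendsto.mono_left nhdsWithin_le_nhds
    have hev : V =ᶠ[nhdsWithin ζ (Ioi ζ)] fun _ => 0 := by
      filter_upwards [self_mem_nhdsWithin] with x hx
      exact hVzero x hx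
    have h0 : Tendsto V (nhdsWithin ζ (Ioi ζ)) (nhds 0) := by
      rw [tendsto_congr' hev]; exact tendsto_const_nhds
    exact tendsto_nhds_unique hlim h0
  -- the scaling family and admissible set
  set Λ : Set ℝ := {l : ℝ | 1 ≤ l ∧ ∀ z, z₀ ≤ z → l ^ (-(2/(m-1))) * V (l * z) ≤ B z}
    with hΛ_def
  have hbdd : BddBelow Λ := ⟨1, fun l hl => hl.1⟩
  have hmem_iff : ∀ l, l ∈ Λ ↔ (1 ≤ l ∧ ∀ z, z₀ ≤ z → l ^ (-(2/(m-1))) * V (l * z) ≤ B z) :=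
    fun l => Iff.rfl
  -- Λ is nonempty
  have hΛne : Λ.Nonempty := by
    set ζ' := (z₀ + ζ)/2 with hζ'_def
    have hζ'1 : z₀ < ζ' := by rw [hζ'_def]; linarith
    have hζ'2 : ζ' < ζ := by rw [hζ'_def]; linarith
    have hζ'0 : (0:ℝ) < ζ' := lt_trans hz₀ hζ'1
    obtain ⟨xm, hxm, hmin⟩ := isCompact_Icc.exists_isMinOn
      (Set.nonempty_Icc.mpr hζ'1.le)
      (hB.cont.mono (fun x hx => lt_of_lt_of_le hz₀ hx.1))
    have hν : 0 < B xm := hBpos xm hxm.1 (lt_of_le_of_lt hxm.2 hζ'2)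
    set l₀ := max (ζ/ζ') ((V z₀ / B xm) ^ ((m-1)/2) + 1) with hl₀_def
    have hζζ' : 1 < ζ/ζ' := (one_lt_div hζ'0).mpr hζ'2
    have hl₀1 : 1 ≤ l₀ := le_trans hζζ'.le (le_max_left _ _)
    have hl₀pos : 0 < l₀ := lt_of_lt_of_le one_pos hl₀1
    have hl₀c : 0 < l₀ ^ (2/(m-1)) := Real.rpow_pos_of_pos hl₀pos _
    -- main smallness estimate : l₀^(-c) * V z₀ ≤ ν
    have hsmall : l₀ ^ (-(2/(m-1))) * V z₀ ≤ B xm := by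
      have h1 : (V z₀ / B xm) ^ ((m-1)/2) < l₀ :=
        lt_of_lt_of_le (lt_add_one _) (le_max_right _ _)
      have h2 : V z₀ / B xm < l₀ ^ (2/(m-1)) := by
        have h3 := Real.rpow_lt_rpow (Real.rpow_nonneg (by positivity) _) h1 hcpos
        rw [← Real.rpow_mul (by positivity : (0:ℝ) ≤ V z₀ / B xm)] at h3
        have hexp : (m-1)/2 * (2/(m-1)) = 1 := by
          have : m - 1 ≠ 0 := by linarith
          field_simp
        rwa [hexp, Real.rpow_one] at h3
      rw [Real.rpow_neg hl₀pos.le, inv_mul_le_iff₀ hl₀c]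
      nlinarith [(div_lt_iff₀ hν).mp h2]
    refine ⟨l₀, hl₀1, fun z hz => ?_⟩
    have hz0 : (0:ℝ) < z := lt_of_lt_of_le hz₀ hz
    rcases le_or_gt (l₀ * z) ζ with hca | hca
    · -- z is in the region where B ≥ ν
      have hzζ' : z ≤ ζ' := by
        have h4 : l₀ * z ≤ l₀ * ζ' := by
          calc l₀ * z ≤ ζ := hca
            _ = (ζ/ζ') * ζ' := (div_mul_cancel₀ ζ (ne_of_gt hζ'0)).symm
            _ ≤ l₀ * ζ' := mul_le_mul_of_nonneg_right (le_max_left _ _) hζ'0.le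
        exact le_of_mul_le_mul_left h4 hl₀pos
      have hBν : B xm ≤ B z := hmin (Set.mem_Icc.mpr ⟨hz, hzζ'⟩)
      have h5 : V (l₀ * z) ≤ V z₀ :=
        hVanti z₀ (l₀ * z) (le_refl z₀)
          (le_trans hz (le_mul_of_one_le_left hz0.le hl₀1))
      calc l₀ ^ (-(2/(m-1))) * V (l₀ * z) ≤ l₀ ^ (-(2/(m-1))) * V z₀ :=
            mul_le_mul_of_nonneg_left h5 (Real.rpow_nonneg hl₀pos.le _)
        _ ≤ B xm := hsmall
        _ ≤ B z := hBν
    · -- beyond the support of V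
      rw [hVzero _ hca, mul_zero]
      exact hB.nonneg z hz0
  -- the infimum
  set ls := sInf Λ with hls_def
  have hls1 : 1 ≤ ls := le_csInf hΛne (fun l hl => hl.1)
  have hlspos : (0:ℝ) < ls := lt_of_lt_of_le one_pos hls1
  have hlsmem : ls ∈ Λ := by
    refine ⟨hls1, fun z hz => ?_⟩
    have hz0 : (0:ℝ) < z := lt_of_lt_of_le hz₀ hz
    obtain ⟨u, hu_anti, hu_tendsto, hu_mem⟩ := exists_seq_tendsto_sInf hΛne hbdd
    have hrpow : Tendsto (fun n => (u n) ^ (-(2/(m-1)))) atTop (𝓝 (ls ^ (-(2/(m-1))))) :=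
      ((Real.continuousAt_rpow_const ls (-(2/(m-1)))
        (Or.inl (ne_of_gt hlspos))).tendsto).comp hu_tendsto
    have hVl : Tendsto (fun n => V (u n * z)) atTop (𝓝 (V (ls * z))) :=
      ((hV.continuousAt (mul_pos hlspos hz0)).tendsto).comp (hu_tendsto.mul_const z)
    exact le_of_tendsto (hrpow.mul hVl) (Eventually.of_forall fun n => (hu_mem n).2 z hz)
  rcases eq_or_lt_of_le hls1 with hls_eq | hls_gt
  · -- ls = 1 : conclusion
    intro z hz
    have := hlsmem.2 z hz
    rw [← hls_eq, Real.one_rpow, one_mul, one_mul] at this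
    exact this
  -- ls > 1 : contradiction
  exfalso
  have hWsol : IsSolS d α b m z₀ (fun z => ls ^ (-(2/(m-1))) * V (ls * z)) :=
    hV.scale hm hz₀ hls1
  -- strict inequality at z₀
  have hstrict : ls ^ (-(2/(m-1))) * V (ls * z₀) < B z₀ := by
    have h1 : V (ls * z₀) ≤ V z₀ :=
      hVanti z₀ (ls * z₀) (le_refl z₀) (le_mul_of_one_le_left hz₀.le hls1)
    have h2 : ls ^ (-(2/(m-1))) < 1 :=
      Real.rpow_lt_one_of_one_lt_of_neg hls_gt (by linarith)
    calc ls ^ (-(2/(m-1))) * V (ls * z₀) ≤ ls ^ (-(2/(m-1))) * V z₀ :=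
          mul_le_mul_of_nonneg_left h1 (Real.rpow_nonneg hlspos.le _)
      _ < 1 * V z₀ := mul_lt_mul_of_pos_right h2 hu₀
      _ = B z₀ := by rw [one_mul, hval]
  -- no contact strictly inside the support
  have hnocontact : ∀ zb, z₀ ≤ zb → zb < ζ / ls →
      ls ^ (-(2/(m-1))) * V (ls * zb) < B zb := by
    intro zb hzb1 hzb2
    rcases lt_or_eq_of_le (hlsmem.2 zb hzb1) with h | h
    · exact h
    exfalso
    have hzbζ : ls * zb < ζ := by
      have := (lt_div_iff₀ hlspos).mp hzb2
      linarith [this]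
    have hlszb : z₀ ≤ ls * zb := le_trans hzb1 (le_mul_of_one_le_left
      (lt_of_lt_of_le hz₀ hzb1).le hls1)
    have hWposzb : 0 < ls ^ (-(2/(m-1))) * V (ls * zb) :=
      mul_pos (Real.rpow_pos_of_pos hlspos _) (hVpos (ls * zb) hlszb hzbζ)
    rcases eq_or_lt_of_le hzb1 with hzb0 | hzb0
    · -- zb = z₀ : contradicts the strict inequality at z₀
      rw [← hzb0] at h
      linarith [hstrict]
    · -- zb > z₀ : equality propagates to [zb,∞), then Gronwall back to z₀
      have hIB := hB.intgr zb hzb0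
      have hIW := hWsol.intgr zb hzb0
      have hint0 : ∫ ρ in Ioi zb,
          (Kker d α b zb ρ * B ρ - Kker d α b zb ρ * (ls ^ (-(2/(m-1))) * V (ls * ρ))) = 0 := by
        rw [integral_sub hIB hIW, ← hB.eqn zb hzb0, ← hWsol.eqn zb hzb0, ← h]
        ring
      have hEqzb : ∀ w, zb ≤ w → B w = ls ^ (-(2/(m-1))) * V (ls * w) := by
        intro w hw
        rcases eq_or_lt_of_le hw with hww | hww
        · rw [← hww]; exact h.symm
        by_contra hne
        have hw0 : z₀ < w := lt_trans hzb0 hww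
        have hw00 : (0:ℝ) < w := lt_trans hz₀ hw0
        have hfw : 0 < B w - ls ^ (-(2/(m-1))) * V (ls * w) := by
          rcases lt_or_eq_of_le (hlsmem.2 w hw0.le) with h' | h'
          · linarith
          · exact absurd h'.symm hne
        -- find a small interval around w where B - W ≥ θ
        have hcf : ContinuousAt (fun x => B x - ls ^ (-(2/(m-1))) * V (ls * x)) w :=
          (hB.continuousAt hw00).sub (hWsol.continuousAt hw00)
        have hev : ∀ᶠ x in nhds w,
            (B w - ls ^ (-(2/(m-1))) * V (ls * w))/2 <
            B x - ls ^ (-(2/(m-1))) * V (ls * x) :=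
          hcf.eventually_const_lt (by linarith)
        obtain ⟨δ, hδ0, hδ⟩ := Metric.eventually_nhds_iff.mp hev
        set δ' := min (δ/2) ((w - zb)/2) with hδ'_def
        have hδ'0 : 0 < δ' := lt_min (by linarith) (by linarith)
        have hδ'δ : δ' < δ := lt_of_le_of_lt (min_le_left _ _) (by linarith)
        have hδ'w : δ' ≤ (w - zb)/2 := min_le_right _ _
        have hbp : zb < w - δ' := by linarith
        have hθ : ∀ ρ, ρ ∈ Icc (w - δ') (w + δ') →
            (B w - ls ^ (-(2/(m-1))) * V (ls * w))/2 ≤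
            B ρ - ls ^ (-(2/(m-1))) * V (ls * ρ) := by
          intro ρ hρ
          apply le_of_lt
          apply hδ
          rw [Real.dist_eq, abs_lt]
          constructor <;> linarith [hρ.1, hρ.2, hδ'δ]
        have hintdiff : IntegrableOn
            (fun ρ => Kker d α b zb ρ * (B ρ - ls ^ (-(2/(m-1))) * V (ls * ρ))) (Ioi zb) := by
          apply IntegrableOn.congr_fun (hIB.sub hIW) _ measurableSet_Ioi
          intro ρ _
          simp only [Pi.sub_apply]
          ring
        have hlb := integral_lb (f := fun x => B x - ls ^ (-(2/(m-1))) * V (ls * x))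
          hα0 hα1 hb0 hb1 hd (lt_trans hz₀ hzb0) (le_refl zb) hbp
          (by linarith : w - δ' < w + δ') (by linarith : 0 < (B w - ls ^ (-(2/(m-1))) * V (ls * w))/2)
          hθ (fun ρ hρ => by
            have := hlsmem.2 ρ (le_of_lt (lt_trans hzb0 hρ))
            linarith)
          hintdiff
        have hint0' : ∫ ρ in Ioi zb,
            Kker d α b zb ρ * (B ρ - ls ^ (-(2/(m-1))) * V (ls * ρ)) = 0 := by
          rw [setIntegral_congr_fun measurableSet_Ioi
            (fun ρ _ => by ring :
              EqOn (fun ρ => Kker d α b zb ρ * (B ρ - ls ^ (-(2/(m-1))) * V (ls * ρ)))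
                (fun ρ => Kker d α b zb ρ * B ρ -
                  Kker d α b zb ρ * (ls ^ (-(2/(m-1))) * V (ls * ρ))) (Ioi zb))]
          exact hint0
        rw [hint0'] at hlb
        -- but the lower bound is strictly positive
        have hQpos : 0 < Qker d α b (zb / (w - δ')) := by
          apply Qker_pos hα0 hα1 hb0 hb1 hd
          · exact div_pos (lt_trans hz₀ hzb0) (lt_trans (lt_trans hz₀ hzb0) hbp)
          · rw [div_lt_one (lt_trans (lt_trans hz₀ hzb0) hbp)]
            exact hbp
        have hc₀ : 0 < (w - δ') * Qker d α b (zb / (w - δ')) *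
            ((B w - ls ^ (-(2/(m-1))) * V (ls * w))/2) * ((w + δ') - (w - δ')) := by
          apply mul_pos (mul_pos (mul_pos (lt_trans (lt_trans hz₀ hzb0) hbp) hQpos)
            (by linarith)) (by linarith)
        linarith [hlb, hc₀]
      -- Gronwall back to z₀
      have hback := eq_propagate hα0 hα1 hb0 hb1 hd hm hz₀ hB hWsol hzb0
        (fun z hz => hlsmem.2 z hz) hWposzb hEqzb
      linarith [hstrict, hback]
  -- pushing the slide below ls : sequences
  set u : ℕ → ℝ := fun n => ls - (ls - 1)/(n+2) with hu_def
  have hu_lb : ∀ n, (ls + 1)/2 ≤ u n := by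
    intro n
    have h1 : (ls - 1)/((n:ℝ)+2) ≤ (ls - 1)/2 := by
      apply div_le_div_of_nonneg_left (by linarith) (by norm_num) (by
        have : (0:ℝ) ≤ (n:ℝ) := Nat.cast_nonneg n
        linarith)
    rw [hu_def]
    simp only []
    linarith
  have hu_pos : ∀ n, 1 ≤ u n := fun n => le_trans (by linarith : (1:ℝ) ≤ (ls+1)/2) (hu_lb n)
  have hu_lt : ∀ n, u n < ls := by
    intro n
    have h2 : 0 < (ls - 1)/((n:ℝ)+2) := by
      apply div_pos (by linarith)
      have : (0:ℝ) ≤ (n:ℝ) := Nat.cast_nonneg n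
      linarith
    rw [hu_def]
    simp only []
    linarith
  have hu_tendsto : Tendsto u atTop (𝓝 ls) := by
    have h1 : Tendsto (fun n : ℕ => ((n:ℝ)+2)⁻¹) atTop (𝓝 0) := by
      apply Tendsto.inv_tendsto_atTop
      exact tendsto_atTop_add_const_right atTop 2 tendsto_natCast_atTop_atTop
    have h2 : Tendsto (fun n : ℕ => ls - (ls-1) * ((n:ℝ)+2)⁻¹) atTop (𝓝 (ls - (ls-1)*0)) :=
      tendsto_const_nhds.sub (tendsto_const_nhds.mul h1)
    rw [mul_zero, sub_zero] at h2
    have : u = fun n : ℕ => ls - (ls-1) * ((n:ℝ)+2)⁻¹ := by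
      funext n
      rw [hu_def]
      simp only []
      rw [div_eq_mul_inv]
    rw [this]
    exact h2
  have hnot : ∀ n, u n ∉ Λ := fun n hmem =>
    absurd (csInf_le hbdd hmem) (not_le.mpr (hu_lt n))
  have hex : ∀ n, ∃ z, z₀ ≤ z ∧ B z < (u n) ^ (-(2/(m-1))) * V (u n * z) := by
    intro n
    by_contra hcon
    push_neg at hcon
    exact hnot n ⟨hu_pos n, fun z hz => hcon z hz⟩
  choose zs hzs1 hzs2 using hex
  have hlsp1 : (0:ℝ) < (ls+1)/2 := by linarith
  have hzs_ub : ∀ n, zs n ≤ ζ / ((ls+1)/2) := by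
    intro n
    have hupos : 0 < u n := lt_of_lt_of_le one_pos (hu_pos n)
    have hVp : 0 < V (u n * zs n) := by
      by_contra hVn
      push_neg at hVn
      have h0 : (u n) ^ (-(2/(m-1))) * V (u n * zs n) ≤ 0 :=
        mul_nonpos_of_nonneg_of_nonpos (Real.rpow_nonneg hupos.le _) hVn
      have hBnn : 0 ≤ B (zs n) := hB.nonneg _ (lt_of_lt_of_le hz₀ (hzs1 n))
      linarith [hzs2 n]
    have hzsζ : u n * zs n ≤ ζ := by
      by_contra hgt
      push_neg at hgt
      rw [hVzero _ hgt] at hVp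
      exact lt_irrefl _ hVp
    calc zs n = (u n * zs n) / u n := by field_simp
      _ ≤ ζ / u n := by gcongr
      _ ≤ ζ / ((ls+1)/2) := by
          apply div_le_div_of_nonneg_left hζ0.le hlsp1 (hu_lb n)
  obtain ⟨zh, hzh_mem, φ, hφmono, hφtend⟩ :=
    (isCompact_Icc (a := z₀) (b := ζ / ((ls+1)/2))).tendsto_subseq
      (fun n => Set.mem_Icc.mpr ⟨hzs1 n, hzs_ub n⟩)
  have hzh0 : (0:ℝ) < zh := lt_of_lt_of_le hz₀ hzh_mem.1
  have hu_lim : Tendsto (u ∘ φ) atTop (𝓝 ls) := hu_tendsto.comp hφmono.tendsto_atTop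
  have hmul : Tendsto (fun n => u (φ n) * zs (φ n)) atTop (𝓝 (ls * zh)) :=
    hu_lim.mul hφtend
  have hW_lim : Tendsto (fun n => (u (φ n)) ^ (-(2/(m-1))) * V (u (φ n) * zs (φ n)))
      atTop (𝓝 (ls ^ (-(2/(m-1))) * V (ls * zh))) := by
    apply Tendsto.mul
    · exact ((Real.continuousAt_rpow_const ls (-(2/(m-1)))
        (Or.inl (ne_of_gt hlspos))).tendsto).comp hu_lim
    · exact ((hV.continuousAt (mul_pos hlspos hzh0)).tendsto).comp hmul
  have hB_lim : Tendsto (fun n => B (zs (φ n))) atTop (𝓝 (B zh)) :=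
    ((hB.continuousAt hzh0).tendsto).comp hφtend
  have hineq : B zh ≤ ls ^ (-(2/(m-1))) * V (ls * zh) :=
    le_of_tendsto_of_tendsto' hB_lim hW_lim (fun n => (hzs2 (φ n)).le)
  have hzhle : zh ≤ ζ / ls := by
    have h1 : ∀ n, zs (φ n) ≤ ζ / (u (φ n)) := by
      intro n
      have hupos : 0 < u (φ n) := lt_of_lt_of_le one_pos (hu_pos (φ n))
      have hVp : 0 < V (u (φ n) * zs (φ n)) := by
        by_contra hVn
        push_neg at hVn
        have h0 : (u (φ n)) ^ (-(2/(m-1))) * V (u (φ n) * zs (φ n)) ≤ 0 :=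
          mul_nonpos_of_nonneg_of_nonpos (Real.rpow_nonneg hupos.le _) hVn
        have hBnn : 0 ≤ B (zs (φ n)) := hB.nonneg _ (lt_of_lt_of_le hz₀ (hzs1 (φ n)))
        linarith [hzs2 (φ n)]
      have hzsζ : u (φ n) * zs (φ n) ≤ ζ := by
        by_contra hgt
        push_neg at hgt
        rw [hVzero _ hgt] at hVp
        exact lt_irrefl _ hVp
      rw [le_div_iff₀ hupos, mul_comm]
      exact hzsζ
    have h2 : Tendsto (fun n => ζ / (u (φ n))) atTop (𝓝 (ζ / ls)) :=
      tendsto_const_nhds.div hu_lim (ne_of_gt hlspos)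
    exact le_of_tendsto_of_tendsto' hφtend h2 h1
  rcases lt_or_eq_of_le hzhle with hlt | heqζ
  · exact absurd hineq (not_le.mpr (hnocontact zh hzh_mem.1 hlt))
  · -- zh = ζ / ls : then B zh = 0, contradicting positivity of B below ζ
    have hlsz : ls * zh = ζ := by
      rw [heqζ, mul_div_cancel₀ _ (ne_of_gt hlspos)]
    have hzhlt : zh < ζ := by
      rw [heqζ]
      rw [div_lt_iff₀ hlspos]
      nlinarith
    have hBzh : 0 < B zh := hBpos zh hzh_mem.1 hzhlt
    rw [hlsz, hVζ, mul_zero] at hineq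
    linarith

end Slide

section Final

variable {d : ℕ} {α b m z₀ : ℝ} {V B : ℝ → ℝ}

lemma eq_of_le (hα0 : 0 < α) (hα1 : α < 1) (hb0 : 0 < b) (hb1 : b ≤ 1) (hd : 1 ≤ d)
    (hm : 1 < m) (hz₀ : 0 < z₀)
    (hV : IsSolS d α b m z₀ V) (hB : IsSolS d α b m z₀ B)
    (hval : V z₀ = B z₀)
    (hle : ∀ z, z₀ ≤ z → V z ≤ B z) :
    ∀ z, z₀ ≤ z → V z = B z := by
  by_contra hcon
  push_neg at hcon
  obtain ⟨w, hw1, hw2⟩ := hcon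
  have hm0 : (0:ℝ) < m := by linarith
  have hfw : 0 < B w - V w := by
    rcases lt_or_eq_of_le (hle w hw1) with h | h
    · linarith
    · exact absurd h hw2
  have hwz₀ : z₀ < w := by
    rcases eq_or_lt_of_le hw1 with h | h
    · exfalso; rw [← h] at hw2; exact hw2 hval
    · exact h
  have hw00 : (0:ℝ) < w := lt_trans hz₀ hwz₀
  have hcf : ContinuousAt (fun x => B x - V x) w :=
    (hB.continuousAt hw00).sub (hV.continuousAt hw00)
  have hev : ∀ᶠ x in 𝓝 w, (B w - V w)/2 < B x - V x :=
    hcf.eventually_const_lt (by linarith)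
  obtain ⟨δ, hδ0, hδ⟩ := Metric.eventually_nhds_iff.mp hev
  set δ' := min (δ/2) ((w - z₀)/2) with hδ'_def
  have hδ'0 : 0 < δ' := lt_min (by linarith) (by linarith)
  have hδ'δ : δ' < δ := lt_of_le_of_lt (min_le_left _ _) (by linarith)
  have hδ'w : δ' ≤ (w - z₀)/2 := min_le_right _ _
  have hp0 : z₀ < w - δ' := by linarith
  set z₁ := (z₀ + (w - δ'))/2 with hz₁_def
  have hz₁1 : z₀ < z₁ := by rw [hz₁_def]; linarith
  have hz₁2 : z₁ < w - δ' := by rw [hz₁_def]; linarith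
  have hθ : ∀ ρ, ρ ∈ Icc (w - δ') (w + δ') → (B w - V w)/2 ≤ B ρ - V ρ := by
    intro ρ hρ
    apply le_of_lt
    apply hδ
    rw [Real.dist_eq, abs_lt]
    constructor <;> linarith [hρ.1, hρ.2, hδ'δ]
  have hQpos : 0 < Qker d α b (z₁ / (w - δ')) := by
    apply Qker_pos hα0 hα1 hb0 hb1 hd
    · exact div_pos (lt_trans hz₀ hz₁1) (lt_trans hz₀ hp0)
    · rw [div_lt_one (lt_trans hz₀ hp0)]
      exact hz₁2
  set c₀ := (w - δ') * Qker d α b (z₁ / (w - δ')) * ((B w - V w)/2) * ((w + δ') - (w - δ'))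
    with hc₀_def
  have hc₀ : 0 < c₀ := by
    rw [hc₀_def]
    apply mul_pos (mul_pos (mul_pos (lt_trans hz₀ hp0) hQpos) (by linarith)) (by linarith)
  -- uniform lower bound on the difference of powers near z₀
  have hpsi : ∀ z, z₀ < z → z ≤ z₁ → c₀ ≤ B z ^ m - V z ^ m := by
    intro z hz hzz₁
    have hz0 : (0:ℝ) < z := lt_trans hz₀ hz
    have hIB := hB.intgr z hz
    have hIV := hV.intgr z hz
    have hdiffint : IntegrableOn (fun ρ => Kker d α b z ρ * (B ρ - V ρ)) (Ioi z) := by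
      apply IntegrableOn.congr_fun (hIB.sub hIV) _ measurableSet_Ioi
      intro ρ _
      simp only [Pi.sub_apply]
      ring
    have hlb := integral_lb (f := fun x => B x - V x)
      hα0 hα1 hb0 hb1 hd hz0 hzz₁ hz₁2
      (by linarith : w - δ' < w + δ') (by linarith : 0 < (B w - V w)/2)
      hθ (fun ρ hρ => sub_nonneg.mpr (hle ρ (le_of_lt (lt_trans hz hρ))))
      hdiffint
    have heqn : ∫ ρ in Ioi z, Kker d α b z ρ * (B ρ - V ρ) = B z ^ m - V z ^ m := by
      rw [setIntegral_congr_fun measurableSet_Ioi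
        (fun ρ _ => by ring :
          EqOn (fun ρ => Kker d α b z ρ * (B ρ - V ρ))
            (fun ρ => Kker d α b z ρ * B ρ - Kker d α b z ρ * V ρ) (Ioi z))]
      rw [integral_sub hIB hIV, ← hB.eqn z hz, ← hV.eqn z hz]
    rw [heqn] at hlb
    rw [hc₀_def]
    linarith
  -- take the limit z → z₀⁺
  have hBm : ContinuousAt (fun x : ℝ => x ^ m) (B z₀) :=
    Real.continuousAt_rpow_const _ _ (Or.inr hm0.le)
  have hVm : ContinuousAt (fun x : ℝ => x ^ m) (V z₀) :=
    Real.continuousAt_rpow_const _ _ (Or.inr hm0.le)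
  have htend : Tendsto (fun z => B z ^ m - V z ^ m) (nhdsWithin z₀ (Ioi z₀))
      (nhds (B z₀ ^ m - V z₀ ^ m)) := by
    apply Tendsto.mono_left _ nhdsWithin_le_nhds
    exact (hBm.comp (hB.continuousAt hz₀)).sub (hVm.comp (hV.continuousAt hz₀))
  have hlimge : c₀ ≤ B z₀ ^ m - V z₀ ^ m := by
    apply ge_of_tendsto htend
    filter_upwards [Ioc_mem_nhdsGT_of_mem (⟨le_refl z₀, hz₁1⟩ : z₀ ∈ Ico z₀ z₁)] with z hz
    exact hpsi z hz.1 hz.2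
  rw [hval, sub_self] at hlimge
  linarith

end Final

/-- forward uniqueness in the slow-diffusion range `m > 1`. If two
continuous nonnegative solutions of the profile integral equation on `(z₀,∞)` agree at
`z₀`, and the first has support `[0,R]` with `R ∈ (z₀,∞)`, then they agree on `[z₀,∞)`. -/
theorem forward_uniqueness (d : ℕ) (hd : 1 ≤ d) (α m b : ℝ)
    (hα : α ∈ Set.Ioo (0:ℝ) 1)
    (hm : 1 < m)
    (hb : b = α / (2 + (d:ℝ) * (m - 1)))
    (z₀ : ℝ) (hz₀ : 0 < z₀)
    (U₁ U₂ : ℝ → ℝ)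
    (hc₁ : ContinuousOn U₁ (Set.Ioi 0)) (hc₂ : ContinuousOn U₂ (Set.Ioi 0))
    (hpos₁ : ∀ z, 0 < z → 0 ≤ U₁ z) (hpos₂ : ∀ z, 0 < z → 0 ≤ U₂ z)
    (hsol₁ : ∀ z, z₀ < z →
      MeasureTheory.IntegrableOn (fun ρ => Kker d α b z ρ * U₁ ρ) (Set.Ioi z) ∧
      U₁ z ^ m = ∫ ρ in Set.Ioi z, Kker d α b z ρ * U₁ ρ)
    (hsol₂ : ∀ z, z₀ < z →
      MeasureTheory.IntegrableOn (fun ρ => Kker d α b z ρ * U₂ ρ) (Set.Ioi z) ∧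
      U₂ z ^ m = ∫ ρ in Set.Ioi z, Kker d α b z ρ * U₂ ρ)
    (R : ℝ) (hR : z₀ < R)
    (hsupp : closure {z : ℝ | 0 < z ∧ U₁ z ≠ 0} = Set.Icc 0 R)
    (hval : U₁ z₀ = U₂ z₀) :
    ∀ z, z₀ ≤ z → U₁ z = U₂ z := by
  obtain ⟨hα0, hα1⟩ := hα
  have hdr : (1:ℝ) ≤ (d:ℝ) := by exact_mod_cast hd
  have hdm : 0 ≤ (d:ℝ) * (m - 1) := mul_nonneg (by linarith) (by linarith)
  have hden : (0:ℝ) < 2 + (d:ℝ) * (m - 1) := by linarith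
  have hb0 : 0 < b := by rw [hb]; positivity
  have hb1 : b ≤ 1 := by
    rw [hb, div_le_one hden]
    linarith
  have hU₁S : IsSolS d α b m z₀ U₁ :=
    ⟨hc₁, hpos₁, fun z hz => (hsol₁ z hz).1, fun z hz => (hsol₁ z hz).2⟩
  have hU₂S : IsSolS d α b m z₀ U₂ :=
    ⟨hc₂, hpos₂, fun z hz => (hsol₂ z hz).1, fun z hz => (hsol₂ z hz).2⟩
  have hU₁anti := hU₁S.anti hα0 hα1 hb0 hb1 hd hm hz₀
  have hU₂anti := hU₂S.anti hα0 hα1 hb0 hb1 hd hm hz₀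
  have hsub : {z : ℝ | 0 < z ∧ U₁ z ≠ 0} ⊆ Set.Icc 0 R := by
    rw [← hsupp]; exact subset_closure
  have hU₁zero : ∀ z, R < z → U₁ z = 0 := by
    intro z hz
    by_contra hne
    have hz0 : (0:ℝ) < z := lt_trans (lt_trans hz₀ hR) hz
    have := hsub ⟨hz0, hne⟩
    exact absurd this.2 (not_le.mpr hz)
  have hU₁pos : ∀ z, z₀ ≤ z → z < R → 0 < U₁ z := by
    intro z hz hzR
    have hRcl : R ∈ closure {z : ℝ | 0 < z ∧ U₁ z ≠ 0} := by
      rw [hsupp]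
      exact Set.mem_Icc.mpr ⟨by linarith, le_refl R⟩
    obtain ⟨w, hwS, hwdist⟩ := Metric.mem_closure_iff.mp hRcl (R - z) (by linarith)
    rw [Real.dist_eq, abs_lt] at hwdist
    have hwz : z ≤ w := by linarith [hwdist.2]
    have hwpos : 0 < U₁ w := lt_of_le_of_ne (hpos₁ w hwS.1) (Ne.symm hwS.2)
    exact lt_of_lt_of_le hwpos (hU₁anti z w hz hwz)
  have hu₀pos : 0 < U₁ z₀ := hU₁pos z₀ (le_refl z₀) hR
  by_cases hA : ∀ z, z₀ ≤ z → z < R → 0 < U₂ z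
  · -- U₂ positive on [z₀, R) : slide U₁ under U₂
    have hle := slide_le hα0 hα1 hb0 hb1 hd hm hz₀ hU₁S hU₂S hval hR hU₁pos hU₁zero hA
    exact eq_of_le hα0 hα1 hb0 hb1 hd hm hz₀ hU₁S hU₂S hval hle
  · -- U₂ vanishes before R : slide U₂ under U₁
    push_neg at hA
    obtain ⟨z1, hz11, hz12, hz13⟩ := hA
    have hz10 : (0:ℝ) < z1 := lt_of_lt_of_le hz₀ hz11
    have hU₂z1 : U₂ z1 = 0 := le_antisymm hz13 (hpos₂ z1 hz10)
    set S0 := {z : ℝ | z₀ ≤ z ∧ U₂ z = 0} with hS0_def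
    have hS0ne : S0.Nonempty := ⟨z1, hz11, hU₂z1⟩
    have hS0bdd : BddBelow S0 := ⟨z₀, fun x hx => hx.1⟩
    set ζ₂ := sInf S0 with hζ₂_def
    have hζ₂z1 : ζ₂ ≤ z1 := csInf_le hS0bdd ⟨hz11, hU₂z1⟩
    have hζ₂R : ζ₂ < R := lt_of_le_of_lt hζ₂z1 hz12
    have hζ₂ge : z₀ ≤ ζ₂ := le_csInf hS0ne (fun x hx => hx.1)
    have hU₂zero : ∀ z, ζ₂ < z → U₂ z = 0 := by
      intro z hz
      obtain ⟨w, hwS, hwlt⟩ := exists_lt_of_csInf_lt hS0ne hz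
      have hz0 : (0:ℝ) < z := lt_of_lt_of_le hz₀ (le_trans hζ₂ge hz.le)
      refine le_antisymm ?_ (hpos₂ z hz0)
      calc U₂ z ≤ U₂ w := hU₂anti w z hwS.1 hwlt.le
        _ = 0 := hwS.2
    have hζ₂gt : z₀ < ζ₂ := by
      rcases lt_or_eq_of_le hζ₂ge with h | h
      · exact h
      exfalso
      have hzero : ∀ z, z₀ < z → U₂ z = 0 := fun z hz => hU₂zero z (by rw [← h]; exact hz)
      have hlim : Tendsto U₂ (nhdsWithin z₀ (Ioi z₀)) (nhds (U₂ z₀)) :=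
        (hU₂S.continuousAt hz₀).tendsto.mono_left nhdsWithin_le_nhds
      have hev : U₂ =ᶠ[nhdsWithin z₀ (Ioi z₀)] fun _ => 0 := by
        filter_upwards [self_mem_nhdsWithin] with x hx
        exact hzero x hx
      have h0 : Tendsto U₂ (nhdsWithin z₀ (Ioi z₀)) (nhds 0) := by
        rw [tendsto_congr' hev]; exact tendsto_const_nhds
      have := tendsto_nhds_unique hlim h0
      rw [← hval] at this
      linarith
    have hU₂pos : ∀ z, z₀ ≤ z → z < ζ₂ → 0 < U₂ z := by
      intro z hz hzζ
      have hznot : z ∉ S0 := notMem_of_lt_csInf hzζ hS0bdd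
      have hz0 : (0:ℝ) < z := lt_of_lt_of_le hz₀ hz
      rcases lt_or_eq_of_le (hpos₂ z hz0) with h | h
      · exact h
      · exact absurd ⟨hz, h.symm⟩ hznot
    have hle := slide_le hα0 hα1 hb0 hb1 hd hm hz₀ hU₂S hU₁S hval.symm hζ₂gt hU₂pos hU₂zero
      (fun z hz hz' => hU₁pos z hz (lt_trans hz' hζ₂R))
    intro z hz
    exact (eq_of_le hα0 hα1 hb0 hb1 hd hm hz₀ hU₂S hU₁S hval.symm hle z hz).symm
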